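/- Let X be a closed subspace of a Banach space Y with property U in Y, and let q : Y* → X* be the restriction map. Then the restriction of q to the set HB(S_{X*}) of all Hahn–Banach extensions of unit functionals on X is a bijection onto S_{X*} which is a homeomorphism for the weak* topologies. -/

import Mathlib

open NormedSpace

/-- If a closed subspace `X` of a Banach space `Y` has property U in `Y`, then the
restriction map `q : Y* → X*`, restricted to the set `HB(S_{X*})` of all Hahn–Banach
extensions of unit functionals of `X` (i.e. norm-one functionals on `Y` whose
restriction to `X` still has norm one), is a bijection onto `S_{X*}` which is a
homeomorphism for the weak* topologies. -/
theorem propertyU_restriction_weakStar_homeomorph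
    (Y : Type*) [NormedAddCommGroup Y] [NormedSpace ℝ Y] [CompleteSpace Y]
    (X : Subspace ℝ Y) (hX : IsClosed (X : Set Y))
    (hU : ∀ f : X →L[ℝ] ℝ, ∃! g : Y →L[ℝ] ℝ, (∀ x : X, g x = f x) ∧ ‖g‖ = ‖f‖) :
    ∃ e : Homeomorph
        {g : WeakDual ℝ Y // ‖WeakDual.toStrongDual g‖ = 1 ∧
          ‖(WeakDual.toStrongDual g).comp X.subtypeL‖ = 1}
        {f : WeakDual ℝ X // ‖WeakDual.toStrongDual f‖ = 1},
      ∀ g, WeakDual.toStrongDual ((e g : {f : WeakDual ℝ X // ‖WeakDual.toStrongDual f‖ = 1}) :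
            WeakDual ℝ X)
          = (WeakDual.toStrongDual (g : WeakDual ℝ Y)).comp X.subtypeL := by
  classical
  -- the restriction map on weak-* duals
  set q : WeakDual ℝ Y → WeakDual ℝ X :=
    fun g => ((WeakDual.toStrongDual g).comp X.subtypeL : X →L[ℝ] ℝ) with hq_def
  have hq_cont : Continuous q :=
    WeakDual.continuous_of_continuous_eval fun x => WeakDual.eval_continuous (x : Y)
  -- restriction does not increase the norm
  have hrest_le : ∀ g : Y →L[ℝ] ℝ, ‖g.comp X.subtypeL‖ ≤ ‖g‖ := by
    intro g
    refine ContinuousLinearMap.opNorm_le_bound _ (norm_nonneg g) fun x => ?_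
    simpa using g.le_opNorm (x : Y)
  set HB : Type _ := {g : WeakDual ℝ Y // ‖WeakDual.toStrongDual g‖ = 1 ∧
      ‖(WeakDual.toStrongDual g).comp X.subtypeL‖ = 1} with hHB_def
  set S : Type _ := {f : WeakDual ℝ X // ‖WeakDual.toStrongDual f‖ = 1} with hS_def
  -- the forward map
  set Φ : HB → S := fun g => ⟨q g.1, g.2.2⟩ with hΦ_def
  -- the inverse map, via the unique Hahn–Banach extension
  have hext : ∀ f : S, ∃ g : Y →L[ℝ] ℝ,
      (∀ x : X, g x = (f : WeakDual ℝ X) x) ∧ ‖g‖ = ‖WeakDual.toStrongDual (f : WeakDual ℝ X)‖ :=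
    fun f => (hU (WeakDual.toStrongDual (f : WeakDual ℝ X))).exists
  set ιY : S → WeakDual ℝ Y := fun f => ((hext f).choose : Y →L[ℝ] ℝ) with hιY_def
  have hι_spec : ∀ f : S, (∀ x : X, ιY f x = (f : WeakDual ℝ X) x) ∧
      ‖WeakDual.toStrongDual (ιY f)‖ = ‖WeakDual.toStrongDual (f : WeakDual ℝ X)‖ :=
    fun f => (hext f).choose_spec
  have hι_rest : ∀ f : S, q (ιY f) = (f : WeakDual ℝ X) := by
    intro f
    exact ContinuousLinearMap.ext fun x => (hι_spec f).1 x
  have hι_mem : ∀ f : S, ‖WeakDual.toStrongDual (ιY f)‖ = 1 ∧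
      ‖(WeakDual.toStrongDual (ιY f)).comp X.subtypeL‖ = 1 := by
    intro f
    refine ⟨by rw [(hι_spec f).2, f.2], ?_⟩
    have : (WeakDual.toStrongDual (ιY f)).comp X.subtypeL
        = WeakDual.toStrongDual (f : WeakDual ℝ X) :=
      ContinuousLinearMap.ext fun x => (hι_spec f).1 x
    rw [this, f.2]
  set ι : S → HB := fun f => ⟨ιY f, hι_mem f⟩ with hι_def
  -- uniqueness of norm-preserving extensions
  have huniq : ∀ (f : S) (g : WeakDual ℝ Y),
      (∀ x : X, g x = (f : WeakDual ℝ X) x) →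
      ‖WeakDual.toStrongDual g‖ = 1 → g = ιY f := by
    intro f g hgx hgn
    have h1 := (hU (WeakDual.toStrongDual (f : WeakDual ℝ X))).unique
      (y₁ := WeakDual.toStrongDual g) (y₂ := WeakDual.toStrongDual (ιY f))
    exact h1 ⟨hgx, by rw [hgn, f.2]⟩ ⟨(hι_spec f).1, (hι_spec f).2⟩
  -- left inverse
  have hleft : ∀ g : HB, ι (Φ g) = g := by
    intro g
    refine Subtype.ext ?_
    refine (huniq (Φ g) g.1 (fun x => rfl) g.2.1).symm
  have hright : ∀ f : S, Φ (ι f) = f := by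
    intro f
    exact Subtype.ext (hι_rest f)
  -- continuity of the forward map
  have hΦ_cont : Continuous Φ :=
    Continuous.subtype_mk (hq_cont.comp continuous_subtype_val) _
  -- continuity of the inverse map
  have hι_cont : Continuous ι := by
    refine Continuous.subtype_mk ?_ _
    rw [continuous_iff_continuousAt]
    intro f₀
    have hK : IsCompact (WeakDual.toStrongDual ⁻¹' Metric.closedBall (0 : Y →L[ℝ] ℝ) 1) :=
      WeakDual.isCompact_closedBall (𝕜 := ℝ) (E := Y) 0 1
    refine hK.tendsto_nhds_of_unique_mapClusterPt ?_ ?_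
    · filter_upwards with f
      simp only [Set.mem_preimage, Metric.mem_closedBall, dist_zero_right]
      exact le_of_eq (hι_mem f).1
    · intro g hg hcl
      -- `q g` is a cluster point of `q ∘ ιY = Subtype.val`, which tends to `f₀`
      have hcomp : (q ∘ ιY) = fun f : S => (f : WeakDual ℝ X) := funext fun f => hι_rest f
      have hcl' : MapClusterPt (q g) (nhds f₀) (q ∘ ιY) :=
        hcl.continuousAt_comp hq_cont.continuousAt
      rw [hcomp] at hcl'
      have htendsto : Filter.Tendsto (fun f : S => (f : WeakDual ℝ X)) (nhds f₀)
          (nhds (f₀ : WeakDual ℝ X)) := continuous_subtype_val.continuousAt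
      have hqg : q g = (f₀ : WeakDual ℝ X) := by
        haveI hcl'' : (nhds (q g) ⊓
            Filter.map (fun f : S => (f : WeakDual ℝ X)) (nhds f₀)).NeBot := hcl'
        have hne : (nhds (q g) ⊓ nhds (f₀ : WeakDual ℝ X)).NeBot :=
          Filter.neBot_of_le (inf_le_inf_left _ htendsto)
        exact eq_of_nhds_neBot hne
      -- norms: `‖g‖ ≤ 1` and `‖g|X‖ = 1` force `‖g‖ = 1`
      have hgle : ‖WeakDual.toStrongDual g‖ ≤ 1 := by
        simpa [dist_zero_right] using hg
      have hrestnorm : ‖(WeakDual.toStrongDual g).comp X.subtypeL‖ = 1 := by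
        have : (WeakDual.toStrongDual g).comp X.subtypeL
            = WeakDual.toStrongDual (f₀ : WeakDual ℝ X) := hqg
        rw [this, f₀.2]
      have hgnorm : ‖WeakDual.toStrongDual g‖ = 1 :=
        le_antisymm hgle (hrestnorm ▸ hrest_le (WeakDual.toStrongDual g))
      -- so `g` is the unique norm-preserving extension of `f₀`
      refine huniq f₀ g ?_ hgnorm
      intro x
      exact DFunLike.congr_fun hqg x
  refine ⟨⟨⟨Φ, ι, hleft, hright⟩, hΦ_cont, hι_cont⟩, fun g => rfl⟩
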